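/- arXiv:1801.05749 — 4 statements merged into one kernel-verified Lean document; each statement's English description precedes it below -/
import Mathlib

section
/- For every m ≥ 2, the coefficient of z^{m−2} in L*_m equals ∑_{1 ≤ j < k ≤ ⌊(m+1)/2⌋} b_j b_k − ∑_{j=1}^{⌊m/2⌋} (a_j^2 − 1). Equivalently, the second elementary symmetric polynomial in the roots of L*_m equals that expression. -/
open Polynomial Finset

/-- Geronimo–Case recursion: `(GC a b m).1 = L*_m`, `(GC a b m).2 = K_m`. -/
noncomputable def GC (a b : ℕ → ℝ) : ℕ → Polynomial ℝ × Polynomial ℝ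
  | 0 => (1, 1)
  | m + 1 =>
      let p := GC a b m
      if m % 2 = 0 then
        (Polynomial.X * p.1 - Polynomial.C (b (m / 2 + 1)) * p.2, p.2)
      else
        (Polynomial.X * p.1 - Polynomial.C ((a (m / 2 + 1)) ^ 2 - 1) * p.2,
         Polynomial.X * p.1 + p.2)

variable (a b : ℕ → ℝ)

lemma GC_zero : GC a b 0 = (1, 1) := by rw [GC]

lemma GC_succ_of_even (m : ℕ) (h : m % 2 = 0) : GC a b (m+1) =
    (X * (GC a b m).1 - C (b (m/2+1)) * (GC a b m).2, (GC a b m).2) := by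
  rw [GC]; simp [h]

lemma GC_succ_of_odd (m : ℕ) (h : m % 2 = 1) : GC a b (m+1) =
    (X * (GC a b m).1 - C ((a (m/2+1))^2 - 1) * (GC a b m).2,
     X * (GC a b m).1 + (GC a b m).2) := by
  rw [GC]; simp [h]

noncomputable def E2 (n : ℕ) : ℝ :=
  ∑ p ∈ (Finset.Icc 1 n ×ˢ Finset.Icc 1 n).filter (fun p => p.1 < p.2), b p.1 * b p.2

lemma E2_zero : E2 b 0 = 0 := by simp [E2]

lemma E2_succ (n : ℕ) : E2 b (n+1) = E2 b n + (∑ j ∈ Icc 1 n, b j) * b (n+1) := by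
  have hset : (Finset.Icc 1 (n+1) ×ˢ Finset.Icc 1 (n+1)).filter (fun p => p.1 < p.2)
      = ((Finset.Icc 1 n ×ˢ Finset.Icc 1 n).filter (fun p => p.1 < p.2)) ∪
        (Finset.Icc 1 n).image (fun j => (j, n+1)) := by
    ext ⟨x, y⟩
    simp only [Finset.mem_filter, Finset.mem_product, Finset.mem_union, Finset.mem_image,
      Finset.mem_Icc, Prod.mk.injEq]
    constructor
    · rintro ⟨⟨⟨hx1, hx2⟩, hy1, hy2⟩, hlt⟩
      by_cases hy : y = n + 1
      · exact Or.inr ⟨x, ⟨hx1, by omega⟩, rfl, hy.symm⟩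
      · exact Or.inl ⟨⟨⟨hx1, by omega⟩, ⟨hy1, by omega⟩⟩, hlt⟩
    · rintro (⟨⟨⟨hx1, hx2⟩, hy1, hy2⟩, hlt⟩ | ⟨j, ⟨hj1, hj2⟩, rfl, rfl⟩)
      · exact ⟨⟨⟨hx1, by omega⟩, hy1, by omega⟩, hlt⟩
      · exact ⟨⟨⟨hj1, by omega⟩, by omega, le_refl _⟩, by omega⟩
  have hdisj : Disjoint ((Finset.Icc 1 n ×ˢ Finset.Icc 1 n).filter (fun p => p.1 < p.2))
      ((Finset.Icc 1 n).image (fun j => (j, n+1))) := by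
    rw [Finset.disjoint_left]
    rintro ⟨x, y⟩ hmem hmem2
    simp only [Finset.mem_filter, Finset.mem_product, Finset.mem_Icc] at hmem
    simp only [Finset.mem_image, Finset.mem_Icc, Prod.mk.injEq] at hmem2
    obtain ⟨j, ⟨hj1, hj2⟩, rfl, rfl⟩ := hmem2
    omega
  rw [E2, hset, Finset.sum_union hdisj,
    Finset.sum_image (by intro x _ y _ h; exact (Prod.ext_iff.mp h).1)]
  simp only [E2]
  rw [← Finset.sum_mul]

lemma GC_key (k : ℕ) :
    (GC a b (2*k+2)).1.natDegree ≤ 2*k+2 ∧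
    (GC a b (2*k+3)).1.natDegree ≤ 2*k+3 ∧
    (GC a b (2*k+2)).2.natDegree ≤ 2*k+2 ∧
    (GC a b (2*k+2)).1.coeff (2*k+2) = 1 ∧
    (GC a b (2*k+3)).1.coeff (2*k+3) = 1 ∧
    (GC a b (2*k+2)).2.coeff (2*k+2) = 1 ∧
    (GC a b (2*k+2)).1.coeff (2*k+1) = -(∑ j ∈ Icc 1 (k+1), b j) ∧
    (GC a b (2*k+3)).1.coeff (2*k+2) = -(∑ j ∈ Icc 1 (k+2), b j) ∧
    (GC a b (2*k+2)).2.coeff (2*k+1) = -(∑ j ∈ Icc 1 (k+1), b j) ∧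
    (GC a b (2*k+2)).1.coeff (2*k) = E2 b (k+1) - ∑ j ∈ Icc 1 (k+1), (a j ^ 2 - 1) ∧
    (GC a b (2*k+3)).1.coeff (2*k+1) = E2 b (k+2) - ∑ j ∈ Icc 1 (k+1), (a j ^ 2 - 1) := by
  have cf : ∀ (p q : ℝ[X]) (c : ℝ) (n m : ℕ), m = n + 1 →
      (X * p - C c * q).coeff m = p.coeff n - c * q.coeff m := by
    rintro p q c n m rfl
    simp [coeff_X_mul]
  have cfK : ∀ (p q : ℝ[X]) (n m : ℕ), m = n + 1 →
      (X * p + q).coeff m = p.coeff n + q.coeff m := by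
    rintro p q n m rfl
    simp [coeff_X_mul]
  have hicc1 : Finset.Icc 1 1 = ({1} : Finset ℕ) := rfl
  have hicc2 : (Finset.Icc 1 2 : Finset ℕ) = {1, 2} := rfl
  have hE1 : E2 b 1 = 0 := by rw [show (1:ℕ) = 0 + 1 from rfl, E2_succ, E2_zero]; simp
  have hE2' : E2 b 2 = b 1 * b 2 := by
    rw [show (2:ℕ) = 1 + 1 from rfl, E2_succ, hE1, hicc1]; simp
  induction k with
  | zero =>
    have h1 : GC a b 1 = (X - C (b 1), 1) := by
      rw [GC_succ_of_even a b 0 rfl, GC_zero]; norm_num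
    have h2 : GC a b 2 = (X^2 - C (b 1) * X - C (a 1 ^2 - 1),
        X^2 - C (b 1) * X + 1) := by
      rw [show (2:ℕ) = 1 + 1 from rfl, GC_succ_of_odd a b 1 rfl, h1]
      simp only [Prod.mk.injEq]; constructor <;> ring
    have h3 : GC a b 3 = (X^3 - C (b 1) * X^2 - C (a 1 ^2 - 1) * X
        - C (b 2) * (X^2 - C (b 1) * X + 1), X^2 - C (b 1) * X + 1) := by
      rw [show (3:ℕ) = 2 + 1 from rfl, GC_succ_of_even a b 2 rfl, h2]
      simp only [Prod.mk.injEq, and_true]; ring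
    norm_num [h2, h3, hicc1, hicc2, hE1, hE2']
    refine ⟨?_, ?_, ?_, ?_, ?_, ?_, ?_, ?_, ?_, ?_, ?_⟩ <;>
      first
      | compute_degree
      | (simp [← map_pow, coeff_C, coeff_one]; try ring)
  | succ k ih =>
    obtain ⟨d1, d2, d3, l1, l2, l3, s1, s2, s3, t1, t2⟩ := ih
    rw [show 2*(k+1)+2 = 2*k+4 by ring, show 2*(k+1)+3 = 2*k+5 by ring,
        show 2*(k+1)+1 = 2*k+3 by ring, show 2*(k+1) = 2*k+2 by ring,
        show k+1+1 = k+2 from rfl, show k+1+2 = k+3 from rfl]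
    have hA : GC a b (2*k+4) =
        (X * (GC a b (2*k+3)).1 - C ((a (k+2))^2 - 1) * (GC a b (2*k+3)).2,
         X * (GC a b (2*k+3)).1 + (GC a b (2*k+3)).2) := by
      have := GC_succ_of_odd a b (2*k+3) (by omega)
      rw [show (2*k+3)/2 + 1 = k+2 by omega] at this
      rw [show 2*k+4 = 2*k+3+1 by omega, this]
    have hB : (GC a b (2*k+3)).2 = (GC a b (2*k+2)).2 := by
      rw [show 2*k+3 = 2*k+2+1 by omega, GC_succ_of_even a b (2*k+2) (by omega)]
    have hC : GC a b (2*k+5) =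
        (X * (GC a b (2*k+4)).1 - C (b (k+3)) * (GC a b (2*k+4)).2, (GC a b (2*k+4)).2) := by
      have := GC_succ_of_even a b (2*k+4) (by omega)
      rw [show (2*k+4)/2 + 1 = k+3 by omega] at this
      rw [show 2*k+5 = 2*k+4+1 by omega, this]
    have z1 : (GC a b (2*k+2)).2.coeff (2*k+3) = 0 :=
      coeff_eq_zero_of_natDegree_lt (lt_of_le_of_lt d3 (by omega))
    have z2 : (GC a b (2*k+2)).2.coeff (2*k+4) = 0 :=
      coeff_eq_zero_of_natDegree_lt (lt_of_le_of_lt d3 (by omega))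
    -- degree bounds
    have ndXL : (X * (GC a b (2*k+3)).1).natDegree ≤ 2*k+4 :=
      natDegree_mul_le.trans (by rw [natDegree_X]; omega)
    have nd4 : (GC a b (2*k+4)).1.natDegree ≤ 2*k+4 := by
      rw [hA]
      exact (natDegree_sub_le _ _).trans (max_le ndXL
        ((natDegree_C_mul_le _ _).trans (by rw [hB]; omega)))
    have ndK4 : (GC a b (2*k+4)).2.natDegree ≤ 2*k+4 := by
      rw [hA]
      exact (natDegree_add_le _ _).trans (max_le ndXL (by rw [hB]; omega))
    have nd5 : (GC a b (2*k+5)).1.natDegree ≤ 2*k+5 := by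
      rw [hC]
      refine (natDegree_sub_le _ _).trans (max_le ?_ ?_)
      · exact natDegree_mul_le.trans (by rw [natDegree_X]; omega)
      · exact (natDegree_C_mul_le _ _).trans (by omega)
    have zK4 : (GC a b (2*k+4)).2.coeff (2*k+5) = 0 :=
      coeff_eq_zero_of_natDegree_lt (lt_of_le_of_lt ndK4 (by omega))
    -- L_{2k+4} coefficients
    have l1' : (GC a b (2*k+4)).1.coeff (2*k+4) = 1 := by
      rw [hA]; dsimp only
      rw [cf _ _ _ (2*k+3) _ rfl, hB, l2, z2]; ring
    have s1' : (GC a b (2*k+4)).1.coeff (2*k+3) = -(∑ j ∈ Icc 1 (k+2), b j) := by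
      rw [hA]; dsimp only
      rw [cf _ _ _ (2*k+2) _ rfl, hB, s2, z1]; ring
    have t1' : (GC a b (2*k+4)).1.coeff (2*k+2) =
        E2 b (k+2) - ∑ j ∈ Icc 1 (k+2), (a j ^ 2 - 1) := by
      rw [hA]; dsimp only
      rw [cf _ _ _ (2*k+1) _ rfl, hB, t2, l3,
        Finset.sum_Icc_succ_top (show 1 ≤ k+2 by omega)]
      ring
    -- K_{2k+4} coefficients
    have l3' : (GC a b (2*k+4)).2.coeff (2*k+4) = 1 := by
      rw [hA]; dsimp only
      rw [cfK _ _ (2*k+3) _ rfl, hB, l2, z2]; ring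
    have s3' : (GC a b (2*k+4)).2.coeff (2*k+3) = -(∑ j ∈ Icc 1 (k+2), b j) := by
      rw [hA]; dsimp only
      rw [cfK _ _ (2*k+2) _ rfl, hB, s2, z1]; ring
    -- L_{2k+5} coefficients
    have l2' : (GC a b (2*k+5)).1.coeff (2*k+5) = 1 := by
      rw [hC]; dsimp only
      rw [cf _ _ _ (2*k+4) _ rfl, l1', zK4]; ring
    have s2' : (GC a b (2*k+5)).1.coeff (2*k+4) = -(∑ j ∈ Icc 1 (k+3), b j) := by
      rw [hC]; dsimp only
      rw [cf _ _ _ (2*k+3) _ rfl, s1', l3',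
        Finset.sum_Icc_succ_top (show 1 ≤ k+3 by omega)]
      ring
    have t2' : (GC a b (2*k+5)).1.coeff (2*k+3) =
        E2 b (k+3) - ∑ j ∈ Icc 1 (k+2), (a j ^ 2 - 1) := by
      rw [hC]; dsimp only
      have hE : E2 b (k+3) = E2 b (k+2) + (∑ j ∈ Icc 1 (k+2), b j) * b (k+3) := E2_succ b (k+2)
      rw [cf _ _ _ (2*k+2) _ rfl, t1', s3', hE]
      ring
    exact ⟨nd4, nd5, ndK4, l1', l2', l3', s1', s2', s3', t1', t2'⟩

lemma pairsum_succ (m : ℕ) (z : Fin (m+1) → ℂ) :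
    ∑ p ∈ (Finset.univ : Finset (Fin (m+1) × Fin (m+1))).filter (fun p => p.1 < p.2),
        z p.1 * z p.2
    = (∑ p ∈ (Finset.univ : Finset (Fin m × Fin m)).filter (fun p => p.1 < p.2),
        z p.1.castSucc * z p.2.castSucc)
      + (∑ i : Fin m, z i.castSucc) * z (Fin.last m) := by
  have hnl : ∀ y : Fin (m+1), ¬ (Fin.last m < y) := fun y => not_lt.2 (Fin.le_last y)
  rw [Finset.sum_filter, Finset.sum_filter, Fintype.sum_prod_type_right,
    Fintype.sum_prod_type_right, Fin.sum_univ_castSucc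
      (f := fun y : Fin (m+1) => ∑ x : Fin (m+1), if x < y then z x * z y else 0)]
  simp only [Fin.sum_univ_castSucc (n := m), Fin.castSucc_lt_castSucc_iff, hnl, if_false,
    Fin.castSucc_lt_last, if_true, add_zero]
  rw [← Finset.sum_mul]

lemma coeff_e2 : ∀ (m : ℕ) (z : Fin (m+2) → ℂ),
    (∏ j, (X - C (z j))).coeff m =
      ∑ p ∈ (Finset.univ : Finset (Fin (m+2) × Fin (m+2))).filter (fun p => p.1 < p.2),
        z p.1 * z p.2 := by
  intro m
  induction m with
  | zero =>
    intro z
    rw [Fin.prod_univ_two]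
    rw [Polynomial.mul_coeff_zero]
    have : (Finset.univ : Finset (Fin 2 × Fin 2)).filter (fun p => p.1 < p.2)
        = {((0 : Fin 2), (1 : Fin 2))} := by decide
    rw [this]
    simp
  | succ m ih =>
    intro z
    rw [Fin.prod_univ_castSucc]
    set Q := ∏ i : Fin (m+2), (X - C (z i.castSucc)) with hQ
    have hQ1 : Q.coeff m = ∑ p ∈ (Finset.univ : Finset (Fin (m+2) × Fin (m+2))).filter
        (fun p => p.1 < p.2), z p.1.castSucc * z p.2.castSucc := ih _
    have hQtop : Q.coeff (m+1) = -∑ i : Fin (m+2), z i.castSucc := by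
      have := Polynomial.prod_X_sub_C_coeff_card_pred (Finset.univ : Finset (Fin (m+2)))
        (fun i => z i.castSucc) (by simp)
      simpa using this
    have hexp : Q * (X - C (z (Fin.last (m+2)))) = Q * X - C (z (Fin.last (m+2))) * Q := by
      ring
    rw [hexp, Polynomial.coeff_sub, Polynomial.coeff_mul_X, Polynomial.coeff_C_mul, hQ1, hQtop,
      pairsum_succ]
    ring

theorem geronimo_case_second_coeff (a b : ℕ → ℝ) (ha : ∀ j, 0 < a j) :
    (∀ m, 2 ≤ m → ((GC a b m).1).coeff (m - 2) =
      (∑ p ∈ (Finset.Icc 1 ((m + 1) / 2) ×ˢ Finset.Icc 1 ((m + 1) / 2)).filter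
          (fun p => p.1 < p.2), b p.1 * b p.2)
        - ∑ j ∈ Finset.Icc 1 (m / 2), (a j ^ 2 - 1)) ∧
    (∀ m (z : Fin m → ℂ), 2 ≤ m →
      ((GC a b m).1).map (algebraMap ℝ ℂ) = ∏ j, (X - C (z j)) →
      (∑ p ∈ (Finset.univ : Finset (Fin m × Fin m)).filter (fun p => p.1 < p.2),
          z p.1 * z p.2) =
        (∑ p ∈ (Finset.Icc 1 ((m + 1) / 2) ×ˢ Finset.Icc 1 ((m + 1) / 2)).filter
            (fun p => p.1 < p.2), ((b p.1 : ℝ) : ℂ) * ((b p.2 : ℝ) : ℂ))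
          - ∑ j ∈ Finset.Icc 1 (m / 2), (((a j : ℝ) : ℂ) ^ 2 - 1)) := by
  have part1 : ∀ m, 2 ≤ m → ((GC a b m).1).coeff (m - 2) =
      (∑ p ∈ (Finset.Icc 1 ((m + 1) / 2) ×ˢ Finset.Icc 1 ((m + 1) / 2)).filter
          (fun p => p.1 < p.2), b p.1 * b p.2)
        - ∑ j ∈ Finset.Icc 1 (m / 2), (a j ^ 2 - 1) := by
    intro m hm
    rcases Nat.even_or_odd m with he | ho
    · obtain ⟨k, hk⟩ : ∃ k, m = 2 * k + 2 := by
        obtain ⟨t, ht⟩ := he; exact ⟨t - 1, by omega⟩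
      subst hk
      rw [show 2*k+2-2 = 2*k by omega, show (2*k+2+1)/2 = k+1 by omega,
        show (2*k+2)/2 = k+1 by omega]
      have := (GC_key a b k).2.2.2.2.2.2.2.2.2.1
      rw [this, E2]
    · obtain ⟨k, hk⟩ : ∃ k, m = 2 * k + 3 := by
        obtain ⟨t, ht⟩ := ho; exact ⟨t - 1, by omega⟩
      subst hk
      rw [show 2*k+3-2 = 2*k+1 by omega, show (2*k+3+1)/2 = k+2 by omega,
        show (2*k+3)/2 = k+1 by omega]
      have := (GC_key a b k).2.2.2.2.2.2.2.2.2.2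
      rw [this, E2]
  refine ⟨part1, ?_⟩
  intro m z hm hfac
  obtain ⟨n, rfl⟩ : ∃ n, m = n + 2 := ⟨m - 2, by omega⟩
  have hco := congrArg (fun p : ℂ[X] => p.coeff n) hfac
  simp only [Polynomial.coeff_map] at hco
  rw [coeff_e2 n z] at hco
  have hp := part1 (n+2) (by omega)
  rw [show n+2-2 = n from rfl] at hp
  rw [hp] at hco
  rw [← hco]
  simp only [map_sub, map_sum, map_mul, map_pow, map_one, Complex.coe_algebraMap]
end

section
/- If z_1, …, z_m are the complex roots (with multiplicity) of L*_m, then ∑_{j=1}^m z_j^2 = ∑_{j=1}^{⌊(m+1)/2⌋} b_j^2 + 2·∑_{j=1}^{⌊m/2⌋} (a_j^2 − 1). -/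
open Polynomial Finset

lemma aux_monic {p r : ℝ[X]} (hp : p.Monic) {n : ℕ} (hpd : p.natDegree = n + 1)
    (hr : r.natDegree ≤ n) : (p + r).Monic ∧ (p + r).natDegree = n + 1 := by
  have hdp : p.degree = ((n + 1 : ℕ) : WithBot ℕ) := by
    rw [degree_eq_natDegree hp.ne_zero, hpd]
  have hdr : r.degree < p.degree := by
    calc r.degree ≤ (r.natDegree : WithBot ℕ) := degree_le_natDegree
    _ ≤ (n : WithBot ℕ) := by exact_mod_cast hr
    _ < p.degree := by rw [hdp]; exact_mod_cast Nat.lt_succ_self n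
  refine ⟨hp.add_of_left hdr, ?_⟩
  have := degree_add_eq_left_of_degree_lt hdr
  exact natDegree_eq_of_degree_eq_some (this.trans hdp)

lemma step_monic (P Q : ℝ[X]) (c : ℝ) {n : ℕ} (hP : P.Monic) (hPd : P.natDegree = n)
    (hQ : Q.natDegree ≤ n) :
    (X * P - C c * Q).Monic ∧ (X * P - C c * Q).natDegree = n + 1 := by
  have hXP : (X * P).Monic := monic_X.mul hP
  have hXPd : (X * P).natDegree = n + 1 := by
    rw [monic_X.natDegree_mul hP, natDegree_X, hPd, Nat.add_comm]
  have hr : (-(C c * Q)).natDegree ≤ n := by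
    rw [natDegree_neg]; exact (natDegree_C_mul_le c Q).trans hQ
  rw [sub_eq_add_neg]; exact aux_monic hXP hXPd hr

lemma step_monic' (P Q : ℝ[X]) {n : ℕ} (hP : P.Monic) (hPd : P.natDegree = n)
    (hQ : Q.natDegree ≤ n) :
    (X * P + Q).Monic ∧ (X * P + Q).natDegree = n + 1 := by
  have hXP : (X * P).Monic := monic_X.mul hP
  have hXPd : (X * P).natDegree = n + 1 := by
    rw [monic_X.natDegree_mul hP, natDegree_X, hPd, Nat.add_comm]
  exact aux_monic hXP hXPd hQ

lemma prod_monic (n : ℕ) (z : Fin n → ℂ) :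
    (∏ j, (X - C (z j))).Monic ∧ (∏ j, (X - C (z j))).natDegree = n := by
  refine ⟨monic_prod_of_monic _ _ (fun i _ => monic_X_sub_C _), ?_⟩
  rw [natDegree_prod_of_monic _ _ (fun i _ => monic_X_sub_C _)]
  simp

lemma key_roots (k : ℕ) (z : Fin (k + 2) → ℂ) :
    ∑ j, z j ^ 2 = ((∏ j, (X - C (z j))).coeff (k + 1)) ^ 2
      - 2 * (∏ j, (X - C (z j))).coeff k := by
  induction k with
  | zero =>
    rw [Fin.sum_univ_two, Fin.prod_univ_two]
    have h1 : ((X - C (z 0)) * (X - C (z 1))).coeff 1 = -(z 0 + z 1) := by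
      simp [mul_sub, sub_mul, coeff_X_mul, coeff_sub, coeff_C]
      ring
    have h0 : ((X - C (z 0)) * (X - C (z 1))).coeff 0 = z 0 * z 1 := by
      simp [mul_coeff_zero]
    rw [h1, h0]; ring
  | succ k ih =>
    rw [Fin.sum_univ_castSucc, Fin.prod_univ_castSucc]
    set P := ∏ j : Fin (k + 2), (X - C (z j.castSucc)) with hP
    obtain ⟨hm, hd⟩ := prod_monic (k + 2) (fun j => z j.castSucc)
    have hm : P.Monic := hm
    have hd : P.natDegree = k + 2 := hd
    set w := z (Fin.last (k + 2))
    have e1 : (P * (X - C w)).coeff (k + 2) = P.coeff (k + 1) - w * P.coeff (k + 2) := by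
      rw [mul_sub, mul_comm P X, coeff_sub, coeff_X_mul, coeff_mul_C]; ring
    have e2 : (P * (X - C w)).coeff (k + 1) = P.coeff k - w * P.coeff (k + 1) := by
      rw [mul_sub, mul_comm P X, coeff_sub, coeff_X_mul, coeff_mul_C]; ring
    have htop : P.coeff (k + 2) = 1 := hd ▸ hm.coeff_natDegree
    rw [e1, e2, htop, ih (fun j => z j.castSucc)]
    ring

lemma GC_even (a b : ℕ → ℝ) (k : ℕ) :
    ((GC a b (2*k+2)).1).Monic ∧ ((GC a b (2*k+2)).1).natDegree = 2*k+2 ∧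
    ((GC a b (2*k+2)).2).Monic ∧ ((GC a b (2*k+2)).2).natDegree = 2*k+2 ∧
    ((GC a b (2*k+2)).2).coeff (2*k+1) = ((GC a b (2*k+2)).1).coeff (2*k+1) ∧
    (((GC a b (2*k+2)).1).coeff (2*k+1))^2 - 2 * (((GC a b (2*k+2)).1).coeff (2*k)) =
      (∑ j ∈ Icc 1 (k+1), (b j)^2) + 2 * ∑ j ∈ Icc 1 (k+1), ((a j)^2 - 1) := by
  induction k with
  | zero =>
    have h2 : GC a b 2 = (X * (X - C (b 1)) - C ((a 1)^2 - 1) * 1,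
        X * (X - C (b 1)) + 1) := by simp [GC]
    have hm := step_monic (X - C (b 1)) 1 ((a 1)^2 - 1) (monic_X_sub_C _)
      (natDegree_X_sub_C _) (by simp)
    have hm' := step_monic' (X - C (b 1)) 1 (monic_X_sub_C _)
      (natDegree_X_sub_C _) (by simp)
    simp only [show 2*0+2 = 2 from rfl, show 2*0+1 = 1 from rfl, show 2*0 = 0 from rfl, h2]
    refine ⟨hm.1, hm.2, hm'.1, hm'.2, ?_, ?_⟩
    · simp [coeff_sub, coeff_add, coeff_X_mul, coeff_C_mul, coeff_C, coeff_one, ← map_pow]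
    · have c1 : (X * (X - C (b 1)) - C ((a 1)^2 - 1) * 1).coeff 1 = -(b 1) := by
        simp [coeff_sub, coeff_X_mul, coeff_C_mul, coeff_C, coeff_one, ← map_pow]
      have c0 : (X * (X - C (b 1)) - C ((a 1)^2 - 1) * 1).coeff 0 = -((a 1)^2 - 1) := by
        simp [coeff_sub, coeff_C_mul, coeff_C, coeff_one, mul_coeff_zero, ← map_pow]
      rw [c1, c0]
      simp [Finset.Icc_self]
      ring
  | succ k ih =>
    obtain ⟨hPm, hPd, hQm, hQd, hr, hmain⟩ := ih
    set P := (GC a b (2*k+2)).1 with hPdef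
    set Q := (GC a b (2*k+2)).2 with hQdef
    have h3 : GC a b (2*k+3) = (X * P - C (b (k+2)) * Q, Q) := by
      show GC a b (2*k+2+1) = _
      rw [GC]
      have h1 : (2*k+2) % 2 = 0 := by omega
      have h2 : (2*k+2) / 2 + 1 = k + 2 := by omega
      simp [h1, h2]
      exact ⟨rfl, rfl⟩
    have h4 : GC a b (2*k+4) =
        (X * (X * P - C (b (k+2)) * Q) - C ((a (k+2))^2 - 1) * Q,
         X * (X * P - C (b (k+2)) * Q) + Q) := by
      show GC a b (2*k+3+1) = _
      rw [GC]
      have h1 : ¬ (2*k+3) % 2 = 0 := by omega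
      have h2 : (2*k+3) / 2 + 1 = k + 2 := by omega
      simp [h1, h2, h3]
    -- facts about P3
    have hP3 := step_monic P Q (b (k+2)) hPm hPd (le_of_eq hQd)
    have hP4 := step_monic (X * P - C (b (k+2)) * Q) Q ((a (k+2))^2 - 1)
      hP3.1 hP3.2 (hQd.le.trans (by omega))
    have hQ4 := step_monic' (X * P - C (b (k+2)) * Q) Q hP3.1 hP3.2 (hQd.le.trans (by omega))
    have hQtop : Q.coeff (2*k+2) = 1 := hQd ▸ hQm.coeff_natDegree
    have hQhigh : Q.coeff (2*k+3) = 0 :=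
      coeff_eq_zero_of_natDegree_lt (by omega)
    have cP3top : (X * P - C (b (k+2)) * Q).coeff (2*k+2)
        = P.coeff (2*k+1) - b (k+2) := by
      rw [show 2*k+2 = (2*k+1)+1 from rfl, coeff_sub, coeff_X_mul, coeff_C_mul,
        show (2*k+1)+1 = 2*k+2 from rfl, hQtop, mul_one]
    have cP3next : (X * P - C (b (k+2)) * Q).coeff (2*k+1)
        = P.coeff (2*k) - b (k+2) * P.coeff (2*k+1) := by
      rw [show 2*k+1 = (2*k)+1 from rfl, coeff_sub, coeff_X_mul, coeff_C_mul,
        show (2*k)+1 = 2*k+1 from rfl, hr]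
    have cP4top : (X * (X * P - C (b (k+2)) * Q) - C ((a (k+2))^2 - 1) * Q).coeff (2*k+3)
        = P.coeff (2*k+1) - b (k+2) := by
      rw [show 2*k+3 = (2*k+2)+1 from rfl, coeff_sub, coeff_X_mul, coeff_C_mul,
        show (2*k+2)+1 = 2*k+3 from rfl, hQhigh, mul_zero, sub_zero, cP3top]
    have cP4next : (X * (X * P - C (b (k+2)) * Q) - C ((a (k+2))^2 - 1) * Q).coeff (2*k+2)
        = P.coeff (2*k) - b (k+2) * P.coeff (2*k+1) - ((a (k+2))^2 - 1) := by
      rw [show 2*k+2 = (2*k+1)+1 from rfl, coeff_sub, coeff_X_mul, coeff_C_mul,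
        show (2*k+1)+1 = 2*k+2 from rfl, hQtop, mul_one, cP3next]
    have cQ4top : (X * (X * P - C (b (k+2)) * Q) + Q).coeff (2*k+3)
        = P.coeff (2*k+1) - b (k+2) := by
      rw [show 2*k+3 = (2*k+2)+1 from rfl, coeff_add, coeff_X_mul,
        show (2*k+2)+1 = 2*k+3 from rfl, hQhigh, add_zero, cP3top]
    simp only [show 2*(k+1)+2 = 2*k+4 from by ring, show 2*(k+1)+1 = 2*k+3 from by ring,
      show 2*(k+1) = 2*k+2 from by ring, h4]
    refine ⟨hP4.1, hP4.2, hQ4.1, hQ4.2, ?_, ?_⟩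
    · rw [cQ4top, cP4top]
    · rw [cP4top, cP4next]
      rw [Finset.sum_Icc_succ_top (by omega : 1 ≤ k+2),
        Finset.sum_Icc_succ_top (by omega : 1 ≤ k+2)]
      have : P.coeff (2*k+1) ^ 2 - 2 * P.coeff (2*k)
          = (∑ j ∈ Icc 1 (k+1), (b j)^2) + 2 * ∑ j ∈ Icc 1 (k+1), ((a j)^2 - 1) := hmain
      linear_combination this

/-- For `m ≥ 2`: the key coefficient identity. -/
lemma GC_coeff (a b : ℕ → ℝ) (k : ℕ) :
    ((GC a b (k+2)).1).Monic ∧ ((GC a b (k+2)).1).natDegree = k+2 ∧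
    (((GC a b (k+2)).1).coeff (k+1))^2 - 2 * (((GC a b (k+2)).1).coeff k) =
      (∑ j ∈ Icc 1 ((k+2+1)/2), (b j)^2) + 2 * ∑ j ∈ Icc 1 ((k+2)/2), ((a j)^2 - 1) := by
  rcases Nat.even_or_odd k with ⟨t, ht⟩ | ⟨t, ht⟩
  · subst ht
    obtain ⟨hPm, hPd, hQm, hQd, hr, hmain⟩ := GC_even a b t
    simp only [show t+t+2+1 = 2*t+3 from by ring, show (2*t+3)/2 = t+1 from by omega,
      show t+t+2 = 2*t+2 from by ring, show (2*t+2)/2 = t+1 from by omega,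
      show t+t+1 = 2*t+1 from by ring, show t+t = 2*t from by ring]
    exact ⟨hPm, hPd, hmain⟩
  · subst ht
    obtain ⟨hPm, hPd, hQm, hQd, hr, hmain⟩ := GC_even a b t
    set P := (GC a b (2*t+2)).1 with hPdef
    set Q := (GC a b (2*t+2)).2 with hQdef
    have h3 : GC a b (2*t+3) = (X * P - C (b (t+2)) * Q, Q) := by
      show GC a b (2*t+2+1) = _
      rw [GC]
      have h1 : (2*t+2) % 2 = 0 := by omega
      have h2 : (2*t+2) / 2 + 1 = t + 2 := by omega
      simp [h1, h2]
      exact ⟨rfl, rfl⟩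
    have hP3 := step_monic P Q (b (t+2)) hPm hPd (le_of_eq hQd)
    have hQtop : Q.coeff (2*t+2) = 1 := hQd ▸ hQm.coeff_natDegree
    have cP3top : (X * P - C (b (t+2)) * Q).coeff (2*t+2)
        = P.coeff (2*t+1) - b (t+2) := by
      rw [show 2*t+2 = (2*t+1)+1 from rfl, coeff_sub, coeff_X_mul, coeff_C_mul,
        show (2*t+1)+1 = 2*t+2 from rfl, hQtop, mul_one]
    have cP3next : (X * P - C (b (t+2)) * Q).coeff (2*t+1)
        = P.coeff (2*t) - b (t+2) * P.coeff (2*t+1) := by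
      rw [show 2*t+1 = (2*t)+1 from rfl, coeff_sub, coeff_X_mul, coeff_C_mul,
        show (2*t)+1 = 2*t+1 from rfl, hr]
    simp only [show 2*t+1+2 = 2*t+3 from by ring, show 2*t+1+2+1 = 2*t+4 from by ring,
      show (2*t+4)/2 = t+2 from by omega, show (2*t+3)/2 = t+1 from by omega,
      show 2*t+1+1 = 2*t+2 from by ring, h3]
    refine ⟨hP3.1, hP3.2, ?_⟩
    rw [cP3top, cP3next, Finset.sum_Icc_succ_top (by omega : 1 ≤ t+2)]
    linear_combination hmain

theorem geronimo_case_sum_root_squares (a b : ℕ → ℝ) (ha : ∀ j, 0 < a j)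
    (m : ℕ) (z : Fin m → ℂ)
    (hz : ((GC a b m).1).map (algebraMap ℝ ℂ) = ∏ j, (X - C (z j))) :
    ∑ j, (z j) ^ 2 =
      (∑ j ∈ Finset.Icc 1 ((m + 1) / 2), ((b j : ℝ) : ℂ) ^ 2)
        + 2 * ∑ j ∈ Finset.Icc 1 (m / 2), (((a j : ℝ) : ℂ) ^ 2 - 1) := by
  match m, z, hz with
  | 0, z, hz => simp
  | 1, z, hz =>
    have h1 : GC a b 1 = (X - C (b 1), 1) := by simp [GC]
    rw [h1] at hz
    have hc := congrArg (fun p => Polynomial.coeff p 0) hz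
    simp only [Fin.prod_univ_one, Polynomial.map_sub, Polynomial.map_X, Polynomial.map_C,
      coeff_sub, coeff_X_zero, coeff_C_zero, zero_sub, neg_inj] at hc
    have hz0 : z 0 = ((b 1 : ℝ) : ℂ) := by
      rw [← hc]; rfl
    simp [Fin.sum_univ_one, hz0, Finset.Icc_self]
  | (k+2), z, hz =>
    obtain ⟨hPm, hPd, hmain⟩ := GC_coeff a b k
    have hc1 : (∏ j, (X - C (z j))).coeff (k+1)
        = (((GC a b (k+2)).1.coeff (k+1) : ℝ) : ℂ) := by
      rw [← hz, coeff_map]; rfl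
    have hc2 : (∏ j, (X - C (z j))).coeff k
        = (((GC a b (k+2)).1.coeff k : ℝ) : ℂ) := by
      rw [← hz, coeff_map]; rfl
    have hcast := congrArg (fun x : ℝ => (x : ℂ)) hmain
    push_cast at hcast
    rw [key_roots k z, hc1, hc2]
    exact_mod_cast hmain
end

section
/- Define the reversal L_m(z) = z^m·L*_m(1/z). Then the Geronimo–Case polynomials satisfy (1 − z^2)·K_{2k}(z) = L_{2k}(z) − z^2·L*_{2k}(z) for all k ≥ 0. -/
open Polynomial Finset

lemma GC_succ_even (a b : ℕ → ℝ) (k : ℕ) :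
    GC a b (2 * k + 1) =
      (Polynomial.X * (GC a b (2 * k)).1 - Polynomial.C (b (k + 1)) * (GC a b (2 * k)).2,
        (GC a b (2 * k)).2) := by
  rw [GC]
  simp [Nat.mul_mod_right, Nat.mul_div_cancel_left]

lemma GC_succ_odd (a b : ℕ → ℝ) (k : ℕ) :
    GC a b (2 * k + 2) =
      (Polynomial.X * (GC a b (2 * k + 1)).1
          - Polynomial.C ((a (k + 1)) ^ 2 - 1) * (GC a b (2 * k + 1)).2,
        Polynomial.X * (GC a b (2 * k + 1)).1 + (GC a b (2 * k + 1)).2) := by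
  show GC a b (2 * k + 1 + 1) = _
  rw [GC]
  have h1 : (2 * k + 1) % 2 = 1 := by omega
  have h2 : (2 * k + 1) / 2 = k := by omega
  simp [h1, h2]

lemma GC_natDegree_le (a b : ℕ → ℝ) (m : ℕ) :
    (GC a b m).1.natDegree ≤ m ∧ (GC a b m).2.natDegree ≤ m := by
  induction m with
  | zero => simp [GC]
  | succ m ih =>
      rw [GC]
      obtain ⟨h1, h2⟩ := ih
      have hx : (Polynomial.X : Polynomial ℝ).natDegree = 1 := Polynomial.natDegree_X
      have key : ∀ (c : ℝ) (p q : Polynomial ℝ), p.natDegree ≤ m → q.natDegree ≤ m →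
          (Polynomial.X * p - Polynomial.C c * q).natDegree ≤ m + 1 := by
        intro c p q hp hq
        refine le_trans (Polynomial.natDegree_sub_le _ _) (max_le ?_ ?_)
        · exact le_trans Polynomial.natDegree_mul_le (by rw [hx]; omega)
        · exact le_trans Polynomial.natDegree_mul_le
            (by rw [Polynomial.natDegree_C]; omega)
      have key2 : ∀ (p q : Polynomial ℝ), p.natDegree ≤ m → q.natDegree ≤ m →
          (Polynomial.X * p + q).natDegree ≤ m + 1 := by
        intro p q hp hq
        refine le_trans (Polynomial.natDegree_add_le _ _) (max_le ?_ ?_)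
        · exact le_trans Polynomial.natDegree_mul_le (by rw [hx]; omega)
        · omega
      by_cases hm : m % 2 = 0 <;> simp only [hm, if_true, if_false]
      · exact ⟨key _ _ _ h1 h2, by omega⟩
      · exact ⟨key _ _ _ h1 h2, key2 _ _ h1 h2⟩

theorem geronimo_case_K_even_reversal (a b : ℕ → ℝ) (ha : ∀ j, 0 < a j) (k : ℕ) :
    (1 - Polynomial.X ^ 2) * (GC a b (2 * k)).2 =
      Polynomial.reflect (2 * k) (GC a b (2 * k)).1
        - Polynomial.X ^ 2 * (GC a b (2 * k)).1 := by
  -- prove jointly with self-reflectivity of K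
  suffices H : ∀ k, (1 - Polynomial.X ^ 2) * (GC a b (2 * k)).2 =
      Polynomial.reflect (2 * k) (GC a b (2 * k)).1
        - Polynomial.X ^ 2 * (GC a b (2 * k)).1 ∧
      Polynomial.reflect (2 * k) (GC a b (2 * k)).2 = (GC a b (2 * k)).2 from (H k).1
  intro k
  induction k with
  | zero => simp [GC]
  | succ k ih =>
      obtain ⟨hP, hQ⟩ := ih
      obtain ⟨hL, hK⟩ := GC_natDegree_le a b (2 * k)
      set L := (GC a b (2 * k)).1 with hLdef
      set K := (GC a b (2 * k)).2 with hKdef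
      have h2 : 2 * (k + 1) = 2 * k + 2 := by ring
      rw [h2, GC_succ_odd, GC_succ_even]
      simp only []
      set b' := b (k + 1)
      set c := (a (k + 1)) ^ 2 - 1
      -- the new polynomials, expanded
      have eL : Polynomial.X * (Polynomial.X * L - Polynomial.C b' * K) - Polynomial.C c * K
          = Polynomial.X ^ 2 * L - Polynomial.C b' * (Polynomial.X * K)
            - Polynomial.C c * K := by ring
      have eK : Polynomial.X * (Polynomial.X * L - Polynomial.C b' * K) + K
          = Polynomial.X ^ 2 * L - Polynomial.C b' * (Polynomial.X * K) + K := by ring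
      -- reflect computations
      have rXXL : Polynomial.reflect (2 * k + 2) (Polynomial.X ^ 2 * L)
          = Polynomial.reflect (2 * k) L := by
        have := Polynomial.reflect_mul (Polynomial.X ^ 2) L
          (F := 2) (G := 2 * k) (by simp) hL
        rw [show 2 * k + 2 = 2 + 2 * k by ring, this, Polynomial.reflect_monomial]
        rw [Polynomial.revAt_le (by norm_num)]
        simp [Polynomial.revAt]
      have rXK : Polynomial.reflect (2 * k + 2) (Polynomial.X * K)
          = Polynomial.X * Polynomial.reflect (2 * k) K := by
        have := Polynomial.reflect_mul (Polynomial.X) K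
          (F := 2) (G := 2 * k) (by simp) hK
        rw [show 2 * k + 2 = 2 + 2 * k by ring, this, ← pow_one Polynomial.X,
          Polynomial.reflect_monomial]
        rw [Polynomial.revAt_le (by norm_num)]
      have rK : Polynomial.reflect (2 * k + 2) K
          = Polynomial.X ^ 2 * Polynomial.reflect (2 * k) K := by
        have := Polynomial.reflect_mul (1 : Polynomial ℝ) K
          (F := 2) (G := 2 * k) (by simp) hK
        rw [show 2 * k + 2 = 2 + 2 * k by ring]
        rw [show (K : Polynomial ℝ) = 1 * K by ring, this]
        rw [show (1 : Polynomial ℝ) = Polynomial.X ^ 0 by simp,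
          Polynomial.reflect_monomial]
        rw [Polynomial.revAt_le (by norm_num)]
        simp [Polynomial.revAt]
      constructor
      · rw [eL, eK]
        rw [Polynomial.reflect_sub, Polynomial.reflect_sub, rXXL,
          Polynomial.reflect_C_mul, rXK, Polynomial.reflect_C_mul, rK, hQ]
        -- goal: (1-X²)(X²L - b'XK + K) = L̃ - b'XK - cX²K - X²(X²L - b'XK - cK)
        have := hP
        -- L̃ = (1-X²)K + X²L
        rw [show Polynomial.reflect (2 * k) L
            = (1 - Polynomial.X ^ 2) * K + Polynomial.X ^ 2 * L by
          rw [hP]; ring]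
        ring
      · rw [eK, Polynomial.reflect_add, Polynomial.reflect_sub, rXXL,
          Polynomial.reflect_C_mul, rXK, rK, hQ]
        rw [show Polynomial.reflect (2 * k) L
            = (1 - Polynomial.X ^ 2) * K + Polynomial.X ^ 2 * L by
          rw [hP]; ring]
        ring
end

section
/- Viewing the coefficients (u^{(2k+1)}_{2k}, …, u^{(2k+1)}_0) of L*_{2k+1} as smooth functions of the variables (u^{(2k)}_{2k−1}, …, u^{(2k)}_0, b_{k+1}) via the relation u^{(2k+1)}_j = u^{(2k)}_{j−1} − b_{k+1} c_j (where c_j are the coefficients of K_{2k}, themselves functions of the u^{(2k)}'s), the Jacobian determinant of this map equals −1. -/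
open Polynomial Finset

/-- Coefficients `c_j` of `K_{2k}` as functions of the coefficients
`u = (u^{(2k)}_l)_l` of `L*_{2k}`, via `c_0 = 1`, `c_1 = u_{2k-1}` and
`c_{j+2} = c_j + u_{2k-(j+2)} - u_j`. -/
def cK (k : ℕ) (u : ℕ → ℝ) : ℕ → ℝ
  | 0 => 1
  | 1 => u (2 * k - 1)
  | j + 2 => cK k u j + u (2 * k - (j + 2)) - u j

/-- The map `(u^{(2k)}_0, …, u^{(2k)}_{2k-1}, b_{k+1}) ↦ (u^{(2k+1)}_0, …, u^{(2k+1)}_{2k})`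
given by `u^{(2k+1)}_j = u^{(2k)}_{j-1} - b_{k+1}·c_j` (with `u^{(2k)}_{-1} := 0` and the
palindromic convention `c_j = c_{2k-j}`).  The vector `v` encodes the `u`'s in its first
`2k` coordinates and `b_{k+1}` in its last coordinate. -/
def stepOddMap (k : ℕ) (v : Fin (2 * k + 1) → ℝ) : Fin (2 * k + 1) → ℝ :=
  let u : ℕ → ℝ := fun l => if h : l < 2 * k then v ⟨l, Nat.lt_succ_of_lt h⟩ else 0
  let bk : ℝ := v ⟨2 * k, Nat.lt_succ_self _⟩
  fun j => (if 1 ≤ (j : ℕ) then u ((j : ℕ) - 1) else 0)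
    - bk * cK k u (min (j : ℕ) (2 * k - (j : ℕ)))

namespace GCJac

/-- last index -/
def lastIdx (k : ℕ) : Fin (2 * k + 1) := ⟨2 * k, Nat.lt_succ_self _⟩

/-- the `u`-vector extracted from `v` -/
def uu (k : ℕ) (v : Fin (2 * k + 1) → ℝ) : ℕ → ℝ :=
  fun l => if h : l < 2 * k then v ⟨l, Nat.lt_succ_of_lt h⟩ else 0

lemma stepOddMap_eq (k : ℕ) (v : Fin (2 * k + 1) → ℝ) :
    stepOddMap k v = fun j : Fin (2 * k + 1) =>
      (if 1 ≤ (j : ℕ) then uu k v ((j : ℕ) - 1) else 0)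
      - v (lastIdx k) * cK k (uu k v) (min (j : ℕ) (2 * k - (j : ℕ))) := rfl

/-- the linear functional `v ↦ uu k v l` -/
noncomputable def uuL (k l : ℕ) : (Fin (2 * k + 1) → ℝ) →L[ℝ] ℝ :=
  if h : l < 2 * k then ContinuousLinearMap.proj ⟨l, Nat.lt_succ_of_lt h⟩ else 0

/-- derivative of `v ↦ cK k (uu k v) m` -/
noncomputable def cKL (k : ℕ) : ℕ → ((Fin (2 * k + 1) → ℝ) →L[ℝ] ℝ)
  | 0 => 0
  | 1 => uuL k (2 * k - 1)
  | m + 2 => cKL k m + uuL k (2 * k - (m + 2)) - uuL k m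

lemma hasFDerivAt_uu (k l : ℕ) (v : Fin (2 * k + 1) → ℝ) :
    HasFDerivAt (fun v : Fin (2 * k + 1) → ℝ => uu k v l) (uuL k l) v := by
  unfold uu uuL
  split_ifs with h
  · exact hasFDerivAt_apply _ v
  · exact hasFDerivAt_const _ _

lemma hasFDerivAt_cK (k : ℕ) (m : ℕ) (v : Fin (2 * k + 1) → ℝ) :
    HasFDerivAt (fun v : Fin (2 * k + 1) → ℝ => cK k (uu k v) m) (cKL k m) v := by
  induction m using Nat.twoStepInduction with
  | zero =>
    simp only [cK, cKL]
    exact hasFDerivAt_const _ _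
  | one =>
    simp only [cK, cKL]
    exact hasFDerivAt_uu k _ v
  | more m ih _ =>
    simp only [cK, cKL]
    exact (ih.add (hasFDerivAt_uu k _ v)).sub (hasFDerivAt_uu k m v)

/-- the `j`-th row of the derivative, as a linear functional -/
noncomputable def rowL (k : ℕ) (v : Fin (2 * k + 1) → ℝ) (j : Fin (2 * k + 1)) :
    (Fin (2 * k + 1) → ℝ) →L[ℝ] ℝ :=
  (if 1 ≤ (j : ℕ) then uuL k ((j : ℕ) - 1) else 0)
    - (v (lastIdx k) • cKL k (min (j : ℕ) (2 * k - (j : ℕ)))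
      + cK k (uu k v) (min (j : ℕ) (2 * k - (j : ℕ))) • ContinuousLinearMap.proj (lastIdx k))

lemma hasFDerivAt_step (k : ℕ) (v : Fin (2 * k + 1) → ℝ) :
    HasFDerivAt (stepOddMap k) (ContinuousLinearMap.pi (rowL k v)) v := by
  have hrw : stepOddMap k = fun v (j : Fin (2 * k + 1)) =>
      (if 1 ≤ (j : ℕ) then uu k v ((j : ℕ) - 1) else 0)
        - v (lastIdx k) * cK k (uu k v) (min (j : ℕ) (2 * k - (j : ℕ))) := by
    funext v; exact stepOddMap_eq k v
  rw [hrw]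
  refine hasFDerivAt_pi.mpr fun j => ?_
  have hmul : HasFDerivAt
      (fun v : Fin (2 * k + 1) → ℝ =>
        v (lastIdx k) * cK k (uu k v) (min (j : ℕ) (2 * k - (j : ℕ))))
      (v (lastIdx k) • cKL k (min (j : ℕ) (2 * k - (j : ℕ)))
        + cK k (uu k v) (min (j : ℕ) (2 * k - (j : ℕ))) • ContinuousLinearMap.proj (lastIdx k))
      v := (hasFDerivAt_apply (lastIdx k) v).mul (hasFDerivAt_cK k _ v)
  by_cases hj : 1 ≤ (j : ℕ)
  · simpa only [rowL, hj, if_true, Pi.sub_def] using (hasFDerivAt_uu k ((j : ℕ) - 1) v).sub hmul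
  · simpa only [rowL, hj, if_false, Pi.sub_def] using (hasFDerivAt_const (0 : ℝ) v).sub hmul

/-! ### the reindexing permutations -/

/-- row reordering, on values -/
def ef (k t : ℕ) : ℕ :=
  if t = 0 then 0 else if t % 2 = 1 then 2 * k - t / 2 else t / 2

/-- its inverse -/
def eg (k j : ℕ) : ℕ :=
  if j = 0 then 0 else if j ≤ k then 2 * j else 2 * (2 * k - j) + 1

lemma ef_lt (k t : ℕ) (h : t < 2 * k + 1) : ef k t < 2 * k + 1 := by
  unfold ef; split_ifs <;> omega

lemma eg_lt (k j : ℕ) (h : j < 2 * k + 1) : eg k j < 2 * k + 1 := by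
  unfold eg; split_ifs <;> omega

lemma eg_ef (k t : ℕ) (h : t < 2 * k + 1) : eg k (ef k t) = t := by
  unfold ef eg; split_ifs <;> first | omega | exact absurd ‹False› not_false

lemma ef_eg (k j : ℕ) (h : j < 2 * k + 1) : ef k (eg k j) = j := by
  unfold ef eg; split_ifs <;> first | omega | exact absurd ‹False› not_false

/-- the row permutation -/
def eqv (k : ℕ) : Equiv.Perm (Fin (2 * k + 1)) where
  toFun t := ⟨ef k t, ef_lt k t t.isLt⟩
  invFun j := ⟨eg k j, eg_lt k j j.isLt⟩
  left_inv t := Fin.ext (eg_ef k t t.isLt)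
  right_inv j := Fin.ext (ef_eg k j j.isLt)

/-- the column permutation, on values -/
def cf (k s : ℕ) : ℕ := if s = 0 then 2 * k else ef k s - 1

def cg (k j : ℕ) : ℕ := if j = 2 * k then 0 else eg k (j + 1)

lemma ef_pos (k t : ℕ) (h0 : 1 ≤ t) (h : t < 2 * k + 1) : 1 ≤ ef k t := by
  unfold ef; split_ifs <;> omega

lemma cf_lt (k s : ℕ) (h : s < 2 * k + 1) : cf k s < 2 * k + 1 := by
  have := ef_lt k s h; unfold cf; split_ifs <;> omega

lemma cg_lt (k j : ℕ) (h : j < 2 * k + 1) : cg k j < 2 * k + 1 := by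
  unfold cg; split_ifs with h'
  · omega
  · exact eg_lt k (j + 1) (by omega)

lemma cg_cf (k s : ℕ) (h : s < 2 * k + 1) : cg k (cf k s) = s := by
  unfold cf cg
  by_cases hs : s = 0
  · simp [hs]
  · have h1 : 1 ≤ ef k s := ef_pos k s (by omega) h
    have h2 : ef k s < 2 * k + 1 := ef_lt k s h
    have h3 : ef k s - 1 ≠ 2 * k := by omega
    simp only [hs, if_false, h3, if_false]
    have h4 : ef k s - 1 + 1 = ef k s := by omega
    rw [h4, eg_ef k s h]

lemma cf_cg (k j : ℕ) (h : j < 2 * k + 1) : cf k (cg k j) = j := by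
  unfold cf cg
  by_cases hj : j = 2 * k
  · simp [hj]
  · have h1 : j + 1 < 2 * k + 1 := by omega
    have h2 : eg k (j + 1) ≠ 0 := by
      unfold eg; split_ifs <;> first | omega | exact absurd ‹False› not_false
    rw [if_neg hj, if_neg h2, ef_eg k (j + 1) h1]
    omega

/-- the column permutation -/
def ceqv (k : ℕ) : Equiv.Perm (Fin (2 * k + 1)) where
  toFun s := ⟨cf k s, cf_lt k s s.isLt⟩
  invFun j := ⟨cg k j, cg_lt k j j.isLt⟩
  left_inv s := Fin.ext (cg_cf k s s.isLt)
  right_inv j := Fin.ext (cf_cg k j j.isLt)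

lemma eqv_val (k : ℕ) (t : Fin (2 * k + 1)) : ((eqv k t : Fin (2 * k + 1)) : ℕ) = ef k t := rfl

lemma ceqv_val (k : ℕ) (s : Fin (2 * k + 1)) :
    ((ceqv k s : Fin (2 * k + 1)) : ℕ) = cf k s := rfl

lemma ceqv_eq (k : ℕ) : ceqv k = (eqv k).trans (finRotate (2 * k + 1)).symm := by
  refine Equiv.ext fun s => ?_
  rw [Equiv.trans_apply, Equiv.eq_symm_apply]
  apply Fin.ext
  rw [finRotate_succ_apply, Fin.val_add_one]
  have h1 := s.isLt
  have h2 : ef k (s : ℕ) < 2 * k + 1 := ef_lt k s h1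
  by_cases hs : (s : ℕ) = 0
  · have he : ef k (s : ℕ) = 0 := by unfold ef; simp [hs]
    have hlast : ceqv k s = Fin.last (2 * k) := by
      apply Fin.ext
      show cf k (s : ℕ) = 2 * k
      unfold cf; rw [if_pos hs]
    rw [if_pos hlast, eqv_val, he]
  · have h3 : 1 ≤ ef k (s : ℕ) := ef_pos k s (by omega) h1
    have hlast : ¬(ceqv k s = Fin.last (2 * k)) := by
      intro hc
      have : cf k (s : ℕ) = 2 * k := congrArg Fin.val hc
      unfold cf at this
      rw [if_neg hs] at this
      omega
    rw [if_neg hlast, eqv_val, ceqv_val]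
    unfold cf
    rw [if_neg hs]
    omega

/-! ### entries of the Jacobian matrix -/

lemma uuL_single (k l : ℕ) (s : Fin (2 * k + 1)) :
    uuL k l (Pi.single s 1) = if ((s : ℕ) = l ∧ l < 2 * k) then 1 else 0 := by
  unfold uuL
  by_cases h : l < 2 * k
  · rw [dif_pos h, ContinuousLinearMap.proj_apply, Pi.single_apply]
    have hiff : ((⟨l, Nat.lt_succ_of_lt h⟩ : Fin (2 * k + 1)) = s) ↔ ((s : ℕ) = l ∧ l < 2 * k) :=
      ⟨fun hc => ⟨(congrArg Fin.val hc).symm, h⟩, fun hc => Fin.ext hc.1.symm⟩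
    rw [if_congr hiff rfl rfl]
  · rw [dif_neg h, ContinuousLinearMap.zero_apply, if_neg (fun hc => h hc.2)]

lemma cKL_single_zero (k m : ℕ) : ∀ s : Fin (2 * k + 1), m ≤ (s : ℕ) + 1 →
    (s : ℕ) + m + 1 ≤ 2 * k → cKL k m (Pi.single s 1) = 0 := by
  induction m using Nat.twoStepInduction with
  | zero => intro s _ _; simp [cKL]
  | one =>
    intro s _ h2
    simp only [cKL]
    rw [uuL_single, if_neg]
    rintro ⟨h, h'⟩; omega
  | more m ih _ =>
    intro s h1 h2
    simp only [cKL, ContinuousLinearMap.sub_apply, ContinuousLinearMap.add_apply]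
    rw [ih s (by omega) (by omega), uuL_single, uuL_single, if_neg, if_neg]
    · ring
    · rintro ⟨h, h'⟩; omega
    · rintro ⟨h, h'⟩; omega

/-- the Jacobian matrix -/
noncomputable def Mmat (k : ℕ) (v : Fin (2 * k + 1) → ℝ) :
    Matrix (Fin (2 * k + 1)) (Fin (2 * k + 1)) ℝ :=
  Matrix.of fun i j => rowL k v i (Pi.single j 1)

lemma Mmat_apply (k : ℕ) (v : Fin (2 * k + 1) → ℝ) (i j : Fin (2 * k + 1)) :
    Mmat k v i j = (if (1 ≤ (i : ℕ) ∧ (j : ℕ) = (i : ℕ) - 1 ∧ (i : ℕ) - 1 < 2 * k)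
        then 1 else 0)
      - (v (lastIdx k) * cKL k (min (i : ℕ) (2 * k - (i : ℕ))) (Pi.single j 1)
        + cK k (uu k v) (min (i : ℕ) (2 * k - (i : ℕ)))
          * (if (j : ℕ) = 2 * k then 1 else 0)) := by
  show rowL k v i (Pi.single j 1) = _
  unfold rowL
  rw [ContinuousLinearMap.sub_apply, ContinuousLinearMap.add_apply,
    ContinuousLinearMap.smul_apply, ContinuousLinearMap.smul_apply,
    ContinuousLinearMap.proj_apply, Pi.single_apply, smul_eq_mul, smul_eq_mul]
  have h1 : ((if 1 ≤ (i : ℕ) then uuL k ((i : ℕ) - 1) else 0) : (Fin (2 * k + 1) → ℝ) →L[ℝ] ℝ)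
        (Pi.single j 1)
      = (if (1 ≤ (i : ℕ) ∧ (j : ℕ) = (i : ℕ) - 1 ∧ (i : ℕ) - 1 < 2 * k) then 1 else 0) := by
    by_cases h : 1 ≤ (i : ℕ)
    · rw [if_pos h, uuL_single]
      by_cases h' : ((j : ℕ) = (i : ℕ) - 1 ∧ (i : ℕ) - 1 < 2 * k)
      · rw [if_pos h', if_pos ⟨h, h'⟩]
      · rw [if_neg h', if_neg (fun hc => h' ⟨hc.2.1, hc.2.2⟩)]
    · rw [if_neg h, if_neg (fun hc => h hc.1)]
      rfl
  have h2 : (if lastIdx k = j then (1 : ℝ) else 0) = (if (j : ℕ) = 2 * k then 1 else 0) := by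
    by_cases h : lastIdx k = j
    · rw [if_pos h, if_pos (by rw [← h]; rfl)]
    · rw [if_neg h, if_neg (fun hc => h (Fin.ext hc.symm))]
  rw [h1, h2]

/-- key arithmetic inequalities for triangularity -/
lemma key_ineq (k t s : ℕ) (h0 : 1 ≤ s) (hts : t ≤ s) (hs : s < 2 * k + 1) :
    min (ef k t) (2 * k - ef k t) ≤ ef k s ∧
      ef k s + min (ef k t) (2 * k - ef k t) ≤ 2 * k := by
  unfold ef; split_ifs <;> first | omega | exact absurd ‹False› not_false

lemma entry_above (k : ℕ) (v : Fin (2 * k + 1) → ℝ) (t s : Fin (2 * k + 1)) (h : t < s) :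
    Mmat k v (eqv k t) (ceqv k s) = 0 := by
  have hlt : (t : ℕ) < (s : ℕ) := Fin.lt_def.mp h
  have hs0 : 1 ≤ (s : ℕ) := by omega
  have hs : (s : ℕ) < 2 * k + 1 := s.isLt
  have hefs1 : 1 ≤ ef k s := ef_pos k s hs0 hs
  have hefslt : ef k (s : ℕ) < 2 * k + 1 := ef_lt k s hs
  have hcf : cf k (s : ℕ) = ef k s - 1 := by unfold cf; rw [if_neg (by omega)]
  have hkey := key_ineq k t s hs0 (le_of_lt hlt) hs
  rw [Mmat_apply, eqv_val, ceqv_val, hcf]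
  rw [if_neg, cKL_single_zero k _ (ceqv k s) ?hA ?hB, if_neg (by omega)]
  · ring
  case hA => rw [ceqv_val, hcf]; omega
  case hB => rw [ceqv_val, hcf]; omega
  · rintro ⟨h1, h2, _⟩
    have he : ef k s = ef k t := by omega
    have := congrArg (eg k) he
    rw [eg_ef k s hs, eg_ef k t t.isLt] at this
    omega

lemma entry_diag_zero (k : ℕ) (v : Fin (2 * k + 1) → ℝ) :
    Mmat k v (eqv k 0) (ceqv k 0) = -1 := by
  have h0 : ((0 : Fin (2 * k + 1)) : ℕ) = 0 := rfl
  have he : ef k 0 = 0 := by unfold ef; simp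
  have hc : cf k 0 = 2 * k := by unfold cf; simp
  rw [Mmat_apply, eqv_val, ceqv_val, h0, he, hc]
  simp [cKL, cK]

lemma entry_diag_one (k : ℕ) (v : Fin (2 * k + 1) → ℝ) (t : Fin (2 * k + 1))
    (ht : 1 ≤ (t : ℕ)) : Mmat k v (eqv k t) (ceqv k t) = 1 := by
  have hts : (t : ℕ) < 2 * k + 1 := t.isLt
  have heft : 1 ≤ ef k t := ef_pos k t ht hts
  have heflt : ef k (t : ℕ) < 2 * k + 1 := ef_lt k t hts
  have hcf : cf k (t : ℕ) = ef k t - 1 := by unfold cf; rw [if_neg (by omega)]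
  have hkey := key_ineq k t t ht le_rfl hts
  rw [Mmat_apply, eqv_val, ceqv_val, hcf]
  rw [if_pos ⟨heft, rfl, by omega⟩,
    cKL_single_zero k _ (ceqv k t) ?hA ?hB, if_neg (by omega)]
  · ring
  case hA => rw [ceqv_val, hcf]; omega
  case hB => rw [ceqv_val, hcf]; omega

lemma det_Mmat (k : ℕ) (v : Fin (2 * k + 1) → ℝ) : (Mmat k v).det = -1 := by
  -- the triangularized matrix
  set N := (Mmat k v).submatrix (eqv k) (ceqv k) with hN
  have htri : N.det = -1 := by
    rw [Matrix.det_of_lowerTriangular N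
      (fun i j hij => entry_above k v i j (OrderDual.toDual_lt_toDual.mp hij))]
    rw [Fin.prod_univ_succ]
    have h1 : N 0 0 = -1 := entry_diag_zero k v
    have h2 : ∀ i : Fin (2 * k), N i.succ i.succ = 1 := fun i =>
      entry_diag_one k v i.succ (by simp [Fin.val_succ])
    rw [h1, Finset.prod_congr rfl (fun i _ => h2 i), Finset.prod_const_one]
    ring
  have hstep1 : N.det = Equiv.Perm.sign (eqv k) * ((Mmat k v).submatrix id (ceqv k)).det := by
    have h := Matrix.det_permute (eqv k) ((Mmat k v).submatrix id (ceqv k))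
    rw [Matrix.submatrix_submatrix] at h
    simpa [Function.comp] using h
  have hstep2 : ((Mmat k v).submatrix id (ceqv k)).det
      = Equiv.Perm.sign (ceqv k) * (Mmat k v).det := Matrix.det_permute' _ _
  have hsign : Equiv.Perm.sign (ceqv k) = Equiv.Perm.sign (eqv k) := by
    have hmul : ceqv k = (finRotate (2 * k + 1)).symm * (eqv k) := ceqv_eq k
    rw [hmul, map_mul]
    have hrot : Equiv.Perm.sign (finRotate (2 * k + 1)).symm = 1 := by
      rw [Equiv.Perm.sign_symm]
      have h2k : 2 * k + 1 = 2 * k + 1 := rfl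
      rw [sign_finRotate]
      exact Even.neg_one_pow (even_two_mul k)
    rw [hrot, one_mul]
  rw [hstep1, hstep2, hsign, ← mul_assoc] at htri
  rcases Int.units_eq_one_or (Equiv.Perm.sign (eqv k)) with h | h <;>
    rw [h] at htri <;> simpa using htri

end GCJac

theorem geronimo_case_jacobian_b_step (k : ℕ) (v : Fin (2 * k + 1) → ℝ) :
    LinearMap.det ((fderiv ℝ (stepOddMap k) v).toLinearMap) = -1 := by
  rw [(GCJac.hasFDerivAt_step k v).fderiv]
  rw [← LinearMap.det_toMatrix']
  have hM : LinearMap.toMatrix'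
      ((ContinuousLinearMap.pi (GCJac.rowL k v)).toLinearMap) = GCJac.Mmat k v := by
    ext i j
    rw [LinearMap.toMatrix'_apply]
    have hs : (fun j' => if j' = j then (1 : ℝ) else 0) = Pi.single j 1 := by
      funext j'; rw [Pi.single_apply]
    rfl
  rw [hM]
  exact GCJac.det_Mmat k v
end
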